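/- arXiv:1808.02583 — 3 statements merged into one kernel-verified Lean document; each statement's English description precedes it below -/
import Mathlib

section
/- Let k, l be reals with k > 0, l ≥ 0, -2k + 4l + 2 > 0, and 1 - k - 16l/13 ≥ 0, let A > (4k+4l+2)/k be real, and set c = l/(-2k+4l+2). Fix constants C₁, C₂ and let ε > 0. Then there is a constant C₃ such that the following holds for all T ≥ 2: if ξ₁, …, ξ_R are real numbers with 1 ≤ ξ_r ≤ T^{13/84} for all r, and such that for every V ≥ 1 the number of indices r with ξ_r ≥ V is at most min(C₁ · T^{1+ε} · V^{-6}, C₂ · T^{1+l/k+ε} · V^{-(4k+4l+2)/k}), then ∑_{r=1}^{R} ξ_r^A ≤ C₃ · T^{1 + 13(A-6)/84 + (A+2)ε}. -/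
open Finset

/-- The dyadic decomposition lemma underlying the third case of the
moment estimate: if values `ξ_r ∈ [1, T^(13/84)]` satisfy the two large-values counting
bounds, then `∑ ξ_r^A ≤ C₃ · T^(1 + 13(A-6)/84 + (A+2)ε)`. -/
theorem dyadic_large_values (k l : ℝ) (hk : 0 < k) (hl : 0 ≤ l)
    (hden : 0 < -2 * k + 4 * l + 2) (hkl : 1 - k - 16 * l / 13 ≥ 0)
    (A : ℝ) (hA : (4 * k + 4 * l + 2) / k < A)
    (c : ℝ) (hc : c = l / (-2 * k + 4 * l + 2))
    (C₁ C₂ ε : ℝ) (hε : 0 < ε) :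
    ∃ C₃ : ℝ, ∀ T : ℝ, T ≥ 2 → ∀ R : ℕ, ∀ ξ : Fin R → ℝ,
      (∀ r, 1 ≤ ξ r ∧ ξ r ≤ T ^ ((13 : ℝ) / 84)) →
      (∀ V : ℝ, V ≥ 1 →
        (({r : Fin R | V ≤ ξ r} : Finset (Fin R)).card : ℝ) ≤
          min (C₁ * T ^ (1 + ε) * V ^ (-6 : ℝ))
            (C₂ * T ^ (1 + l / k + ε) * V ^ (-((4 * k + 4 * l + 2) / k)))) →
      ∑ r, ξ r ^ A ≤ C₃ * T ^ (1 + 13 * (A - 6) / 84 + (A + 2) * ε) := by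
  have hA6 : (6 : ℝ) < A := by
    refine lt_trans ?_ hA
    rw [lt_div_iff₀ hk]; linarith
  set M : ℝ := max C₁ 0 with hM
  have hM0 : 0 ≤ M := le_max_right _ _
  set K : ℝ := 1 / (ε * Real.log 2) + 1 with hK
  have hK0 : 0 ≤ K := by
    have := Real.log_pos (by norm_num : (1:ℝ) < 2)
    positivity
  refine ⟨K * M * (2 : ℝ) ^ A, ?_⟩
  intro T hT R ξ hξ hcount
  have hT1 : (1 : ℝ) ≤ T := by linarith
  have hT0 : (0 : ℝ) < T := by linarith
  have hTp1 : (1 : ℝ) ≤ T ^ ((13 : ℝ) / 84) := Real.one_le_rpow hT1 (by norm_num)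
  set J : ℕ := ⌊Real.logb 2 (T ^ ((13 : ℝ) / 84))⌋₊ with hJ
  have hlogb_nonneg : 0 ≤ Real.logb 2 (T ^ ((13 : ℝ) / 84)) :=
    Real.logb_nonneg one_lt_two hTp1
  have hmaps : ∀ r : Fin R, r ∈ (univ : Finset (Fin R)) →
      ⌊Real.logb 2 (ξ r)⌋₊ ∈ Finset.range (J + 1) := by
    intro r _
    rw [Finset.mem_range, Nat.lt_succ_iff]
    exact Nat.floor_le_floor
      (Real.logb_le_logb_of_le one_lt_two (by linarith [(hξ r).1]) (hξ r).2)
  have hsplit : ∑ r, ξ r ^ A =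
      ∑ j ∈ Finset.range (J + 1),
        ∑ r ∈ univ.filter (fun r => ⌊Real.logb 2 (ξ r)⌋₊ = j), ξ r ^ A :=
    (Finset.sum_fiberwise_of_maps_to hmaps _).symm
  have hfiber : ∀ j ∈ Finset.range (J + 1),
      ∑ r ∈ univ.filter (fun r => ⌊Real.logb 2 (ξ r)⌋₊ = j), ξ r ^ A ≤
        M * (2 : ℝ) ^ A * (T ^ (1 + ε) * T ^ (13 * (A - 6) / 84)) := by
    intro j hj
    have h2j1 : (1 : ℝ) ≤ (2 : ℝ) ^ (j : ℝ) :=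
      Real.one_le_rpow one_le_two (Nat.cast_nonneg j)
    have h2jT : (2 : ℝ) ^ (j : ℝ) ≤ T ^ ((13 : ℝ) / 84) := by
      have hjJ : (j : ℝ) ≤ Real.logb 2 (T ^ ((13 : ℝ) / 84)) := by
        rw [Finset.mem_range, Nat.lt_succ_iff] at hj
        calc (j : ℝ) ≤ (J : ℝ) := by exact_mod_cast hj
          _ ≤ _ := Nat.floor_le hlogb_nonneg
      calc (2 : ℝ) ^ (j : ℝ) ≤ (2 : ℝ) ^ Real.logb 2 (T ^ ((13 : ℝ) / 84)) :=
            Real.rpow_le_rpow_of_exponent_le one_le_two hjJ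
        _ = T ^ ((13 : ℝ) / 84) := Real.rpow_logb two_pos (by norm_num) (by positivity)
    have hsub : univ.filter (fun r => ⌊Real.logb 2 (ξ r)⌋₊ = j) ⊆
        univ.filter (fun r => (2 : ℝ) ^ (j : ℝ) ≤ ξ r) := by
      intro r hr
      simp only [Finset.mem_filter, Finset.mem_univ, true_and] at hr ⊢
      have hjl : (j : ℝ) ≤ Real.logb 2 (ξ r) := by
        rw [← hr]; exact Nat.floor_le (Real.logb_nonneg one_lt_two (hξ r).1)
      calc (2 : ℝ) ^ (j : ℝ) ≤ (2 : ℝ) ^ Real.logb 2 (ξ r) :=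
            Real.rpow_le_rpow_of_exponent_le one_le_two hjl
        _ = ξ r := Real.rpow_logb two_pos (by norm_num) (by linarith [(hξ r).1])
    have hcard : ((univ.filter (fun r => ⌊Real.logb 2 (ξ r)⌋₊ = j)).card : ℝ) ≤
        M * T ^ (1 + ε) * ((2 : ℝ) ^ (j : ℝ)) ^ (-6 : ℝ) := by
      calc ((univ.filter (fun r => ⌊Real.logb 2 (ξ r)⌋₊ = j)).card : ℝ)
          ≤ ((univ.filter (fun r => (2 : ℝ) ^ (j : ℝ) ≤ ξ r)).card : ℝ) := by
            exact_mod_cast Finset.card_le_card hsub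
        _ ≤ C₁ * T ^ (1 + ε) * ((2 : ℝ) ^ (j : ℝ)) ^ (-6 : ℝ) :=
            le_trans (hcount _ h2j1) (min_le_left _ _)
        _ ≤ M * T ^ (1 + ε) * ((2 : ℝ) ^ (j : ℝ)) ^ (-6 : ℝ) := by
            have hpos : (0:ℝ) ≤ T ^ (1 + ε) * ((2 : ℝ) ^ (j : ℝ)) ^ (-6 : ℝ) := by positivity
            have hC : C₁ ≤ M := le_max_left _ _
            nlinarith [hpos]
    have hbound : ∀ r ∈ univ.filter (fun r => ⌊Real.logb 2 (ξ r)⌋₊ = j),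
        ξ r ^ A ≤ ((2 : ℝ) ^ ((j : ℝ) + 1)) ^ A := by
      intro r hr
      simp only [Finset.mem_filter, Finset.mem_univ, true_and] at hr
      have hlt : ξ r ≤ (2 : ℝ) ^ ((j : ℝ) + 1) := by
        have h1 : Real.logb 2 (ξ r) ≤ (j : ℝ) + 1 := by
          rw [← hr]; exact_mod_cast (Nat.lt_floor_add_one (Real.logb 2 (ξ r))).le
        have h2 := Real.rpow_le_rpow_of_exponent_le one_le_two h1
        rwa [Real.rpow_logb two_pos (by norm_num) (by linarith [(hξ r).1])] at h2
      exact Real.rpow_le_rpow (by linarith [(hξ r).1]) hlt (by linarith)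
    have ealg : ((2 : ℝ) ^ (j : ℝ)) ^ (-6 : ℝ) * ((2 : ℝ) ^ ((j : ℝ) + 1)) ^ A =
        (2 : ℝ) ^ A * ((2 : ℝ) ^ (j : ℝ)) ^ (A - 6) := by
      rw [← Real.rpow_mul (by norm_num : (0:ℝ) ≤ 2),
          ← Real.rpow_mul (by norm_num : (0:ℝ) ≤ 2),
          ← Real.rpow_mul (by norm_num : (0:ℝ) ≤ 2),
          ← Real.rpow_add two_pos, ← Real.rpow_add two_pos]
      congr 1; ring
    calc ∑ r ∈ univ.filter (fun r => ⌊Real.logb 2 (ξ r)⌋₊ = j), ξ r ^ A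
        ≤ ∑ r ∈ univ.filter (fun r => ⌊Real.logb 2 (ξ r)⌋₊ = j),
            ((2 : ℝ) ^ ((j : ℝ) + 1)) ^ A := Finset.sum_le_sum hbound
      _ = ((univ.filter (fun r => ⌊Real.logb 2 (ξ r)⌋₊ = j)).card : ℝ) *
            ((2 : ℝ) ^ ((j : ℝ) + 1)) ^ A := by
          rw [Finset.sum_const, nsmul_eq_mul]
      _ ≤ (M * T ^ (1 + ε) * ((2 : ℝ) ^ (j : ℝ)) ^ (-6 : ℝ)) *
            ((2 : ℝ) ^ ((j : ℝ) + 1)) ^ A :=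
          mul_le_mul_of_nonneg_right hcard (by positivity)
      _ = M * (2 : ℝ) ^ A * (T ^ (1 + ε) * ((2 : ℝ) ^ (j : ℝ)) ^ (A - 6)) := by
          linear_combination (M * T ^ (1 + ε)) * ealg
      _ ≤ M * (2 : ℝ) ^ A * (T ^ (1 + ε) * T ^ (13 * (A - 6) / 84)) := by
          apply mul_le_mul_of_nonneg_left _ (by positivity)
          apply mul_le_mul_of_nonneg_left _ (by positivity)
          calc ((2 : ℝ) ^ (j : ℝ)) ^ (A - 6) ≤ (T ^ ((13 : ℝ) / 84)) ^ (A - 6) :=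
                Real.rpow_le_rpow (by positivity) h2jT (by linarith)
            _ = T ^ (13 * (A - 6) / 84) := by
                rw [← Real.rpow_mul hT0.le]; congr 1; ring
  -- sum all fibers
  have htot : ∑ r, ξ r ^ A ≤
      ((J : ℝ) + 1) * (M * (2 : ℝ) ^ A * (T ^ (1 + ε) * T ^ (13 * (A - 6) / 84))) := by
    rw [hsplit]
    have := Finset.sum_le_card_nsmul (Finset.range (J + 1)) _ _ hfiber
    rw [Finset.card_range, nsmul_eq_mul] at this
    convert this using 2
    · rfl
    · exact (Nat.cast_succ J).symm
  -- (J+1) ≤ K * T^ε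
  have hTε1 : (1 : ℝ) ≤ T ^ ε := Real.one_le_rpow hT1 hε.le
  have hlog : Real.log T ≤ T ^ ε / ε := by
    have h1 : Real.log (T ^ ε) ≤ T ^ ε - 1 :=
      Real.log_le_sub_one_of_pos (by positivity)
    rw [Real.log_rpow hT0] at h1
    rw [le_div_iff₀ hε]
    nlinarith
  have hlog2 : (0:ℝ) < Real.log 2 := Real.log_pos (by norm_num)
  have hJle : (J : ℝ) + 1 ≤ K * T ^ ε := by
    have h1 : (J : ℝ) ≤ Real.logb 2 (T ^ ((13 : ℝ) / 84)) := Nat.floor_le hlogb_nonneg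
    have h2 : Real.logb 2 (T ^ ((13 : ℝ) / 84)) ≤ Real.logb 2 T := by
      apply Real.logb_le_logb_of_le one_lt_two (by positivity)
      calc T ^ ((13 : ℝ) / 84) ≤ T ^ (1 : ℝ) :=
            Real.rpow_le_rpow_of_exponent_le hT1 (by norm_num)
        _ = T := Real.rpow_one T
    have h3 : Real.logb 2 T ≤ T ^ ε / (ε * Real.log 2) := by
      rw [Real.logb, div_le_div_iff₀ hlog2 (by positivity)]
      calc Real.log T * (ε * Real.log 2) ≤ (T ^ ε / ε) * (ε * Real.log 2) := by
            apply mul_le_mul_of_nonneg_right hlog (by positivity)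
        _ = T ^ ε * Real.log 2 := by field_simp
    have : (J : ℝ) + 1 ≤ T ^ ε / (ε * Real.log 2) + T ^ ε := by linarith
    calc (J : ℝ) + 1 ≤ T ^ ε / (ε * Real.log 2) + T ^ ε := this
      _ = K * T ^ ε := by rw [hK]; field_simp
  -- finish
  have hbody : (0:ℝ) ≤ M * (2 : ℝ) ^ A * (T ^ (1 + ε) * T ^ (13 * (A - 6) / 84)) := by
    positivity
  calc ∑ r, ξ r ^ A
      ≤ ((J : ℝ) + 1) * (M * (2 : ℝ) ^ A * (T ^ (1 + ε) * T ^ (13 * (A - 6) / 84))) := htot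
    _ ≤ (K * T ^ ε) * (M * (2 : ℝ) ^ A * (T ^ (1 + ε) * T ^ (13 * (A - 6) / 84))) :=
        mul_le_mul_of_nonneg_right hJle hbody
    _ = (K * M * (2 : ℝ) ^ A) * (T ^ ε * (T ^ (1 + ε) * T ^ (13 * (A - 6) / 84))) := by
        ring
    _ = (K * M * (2 : ℝ) ^ A) * T ^ (ε + ((1 + ε) + 13 * (A - 6) / 84)) := by
        have he : T ^ (ε + ((1 + ε) + 13 * (A - 6) / 84)) =
            T ^ ε * (T ^ (1 + ε) * T ^ (13 * (A - 6) / 84)) := by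
          rw [Real.rpow_add hT0, Real.rpow_add hT0]
        rw [he]
    _ ≤ (K * M * (2 : ℝ) ^ A) * T ^ (1 + 13 * (A - 6) / 84 + (A + 2) * ε) := by
        apply mul_le_mul_of_nonneg_left _ (by positivity)
        apply Real.rpow_le_rpow_of_exponent_le hT1
        nlinarith
end

section
/- Let D ≥ 4 and M be real numbers. Assume: (i) for every ε > 0 there is a constant with |β(1/2+it)| ≤ C t^{13/84+ε} for all t ≥ 1; (ii) for every ε > 0 there is a constant with ∫₁^T |ζ(1/2+it)|^D dt ≤ C T^{M+ε} for all T ≥ 2; (iii) for every ε > 0 there is a constant with ∫₁^T |β(1/2+it)|⁴ dt ≤ C T^{1+ε} for all T ≥ 2. Then for every real A with 4 ≤ A ≤ D and every ε > 0 there is a constant C' such that ∫₁^T |ζ(1/2+it) · β(1/2+it)|^A dt ≤ C' T^{(13/84 + (M - 8/21)/D)·A + 8/21 + ε} for all T ≥ 2. -/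
open Complex MeasureTheory

/-- The Dirichlet beta function, i.e. the L-function of the unique nontrivial
Dirichlet character modulo 4. -/
noncomputable def dirichletBeta : ℂ → ℂ :=
  DirichletCharacter.LFunction ((ZMod.χ₄).ringHomComp (Int.castRingHom ℂ))

lemma aux_ne_one (t : ℝ) : (1/2 : ℂ) + t * I ≠ 1 := by
  intro h
  have := congrArg Complex.re h
  simp at this

lemma cont_zeta : Continuous fun t : ℝ => riemannZeta (1/2 + t * I) := by
  rw [continuous_iff_continuousAt]
  intro t
  exact ContinuousAt.comp (differentiableAt_riemannZeta (aux_ne_one t)).continuousAt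
    (f := fun t : ℝ => (1/2 : ℂ) + t * I) (by fun_prop)

lemma cont_beta : Continuous fun t : ℝ => dirichletBeta (1/2 + t * I) := by
  rw [continuous_iff_continuousAt]
  intro t
  exact ContinuousAt.comp
    (DirichletCharacter.differentiableAt_LFunction ((ZMod.χ₄).ringHomComp (Int.castRingHom ℂ)) _
      (Or.inl (aux_ne_one t))).continuousAt
    (f := fun t : ℝ => (1/2 : ℂ) + t * I) (by fun_prop)

lemma memLp_cont {f : ℝ → ℝ} (hf : Continuous f) (T : ℝ) (p : ENNReal) :
    MemLp f p (volume.restrict (Set.Ioc 1 T)) := by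
  haveI : Fact (volume (Set.Ioc (1:ℝ) T) < ⊤) := ⟨by simp [Real.volume_Ioc]⟩
  obtain ⟨C, hC⟩ := (isCompact_Icc (a := (1:ℝ)) (b := T)).exists_bound_of_continuousOn
    hf.continuousOn
  exact MemLp.of_bound hf.aestronglyMeasurable C <|
    (ae_restrict_iff' measurableSet_Ioc).2 <| .of_forall fun x hx => hC x (Set.Ioc_subset_Icc_self hx)

/-- First case of the moment estimate for the Dedekind zeta function
`Z = ζ·β` of `ℤ[i]`: given the subconvexity bound `β(1/2+it) ≪ t^(13/84+ε)`, a moment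
bound `∫₁ᵀ |ζ(1/2+it)|^D dt ≪ T^(M+ε)` and the fourth-moment bound for `β`, for every
`4 ≤ A ≤ D` one gets `∫₁ᵀ |Z(1/2+it)|^A dt ≪ T^((13/84 + (M-8/21)/D)·A + 8/21 + ε)`. -/
theorem dedekind_moment_first_case (D M : ℝ) (hD : 4 ≤ D)
    (hβpt : ∀ ε : ℝ, 0 < ε → ∃ C : ℝ, ∀ t : ℝ, t ≥ 1 →
      ‖dirichletBeta (1/2 + t * I)‖ ≤ C * t ^ (13 / 84 + ε))
    (hζ : ∀ ε : ℝ, 0 < ε → ∃ C : ℝ, ∀ T : ℝ, T ≥ 2 →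
      ∫ t in Set.Ioc (1 : ℝ) T, ‖riemannZeta (1/2 + t * I)‖ ^ D ≤ C * T ^ (M + ε))
    (hβ : ∀ ε : ℝ, 0 < ε → ∃ C : ℝ, ∀ T : ℝ, T ≥ 2 →
      ∫ t in Set.Ioc (1 : ℝ) T, ‖dirichletBeta (1/2 + t * I)‖ ^ (4 : ℝ) ≤ C * T ^ (1 + ε)) :
    ∀ A : ℝ, 4 ≤ A → A ≤ D → ∀ ε : ℝ, 0 < ε → ∃ C' : ℝ, ∀ T : ℝ, T ≥ 2 →
      ∫ t in Set.Ioc (1 : ℝ) T,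
          ‖riemannZeta (1/2 + t * I) * dirichletBeta (1/2 + t * I)‖ ^ A ≤
        C' * T ^ ((13 / 84 + (M - 8 / 21) / D) * A + 8 / 21 + ε) := by
  intro A hA4 hAD ε hε
  have hD0 : (0:ℝ) < D := by linarith
  have hA0 : (0:ℝ) < A := by linarith
  set F : ℝ → ℝ := fun t => ‖riemannZeta (1/2 + t * I)‖ with hF
  set G : ℝ → ℝ := fun t => ‖dirichletBeta (1/2 + t * I)‖ with hG
  set δ : ℝ := ε / (A + 2) with hδdef
  have hδ : 0 < δ := by positivity
  have hεδ : δ * (A + 2) = ε := by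
    rw [hδdef]; field_simp
  obtain ⟨C₁, hC₁⟩ := hβpt δ hδ
  obtain ⟨C₂, hC₂⟩ := hζ δ hδ
  obtain ⟨C₃, hC₃⟩ := hβ δ hδ
  have hC₁0 : 0 ≤ C₁ := by
    have := hC₁ 1 le_rfl
    simpa using le_trans (norm_nonneg _) this
  have hC₂0 : 0 ≤ C₂ := by
    have h1 : (0:ℝ) ≤ ∫ t in Set.Ioc (1:ℝ) 2, F t ^ D :=
      integral_nonneg fun t => Real.rpow_nonneg (norm_nonneg _) _
    have h2 := hC₂ 2 le_rfl
    nlinarith [Real.rpow_pos_of_pos (show (0:ℝ) < 2 by norm_num) (M + δ)]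
  have hC₃0 : 0 ≤ C₃ := by
    have h1 : (0:ℝ) ≤ ∫ t in Set.Ioc (1:ℝ) 2, G t ^ (4:ℝ) :=
      integral_nonneg fun t => Real.rpow_nonneg (norm_nonneg _) _
    have h2 := hC₃ 2 le_rfl
    nlinarith [Real.rpow_pos_of_pos (show (0:ℝ) < 2 by norm_num) (1 + δ)]
  set b : ℝ := 4 * (D - A) / D with hbdef
  have hb0 : 0 ≤ b := by
    apply div_nonneg _ hD0.le
    nlinarith
  have hab0 : 0 ≤ A - b := by
    rw [hbdef, sub_nonneg, div_le_iff₀ hD0]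
    nlinarith
  set e : ℝ := 13 / 84 + δ with hedef
  have he0 : 0 < e := by positivity
  -- continuity facts
  have hFc : Continuous F := cont_zeta.norm
  have hGc : Continuous G := cont_beta.norm
  have hFA : Continuous fun t => F t ^ A := hFc.rpow_const fun x => Or.inr hA0.le
  have hGb : Continuous fun t => G t ^ b := hGc.rpow_const fun x => Or.inr hb0
  refine ⟨C₁ ^ (A - b) * (C₂ ^ (A / D) * C₃ ^ ((D - A) / D)), fun T hT => ?_⟩
  have hT1 : (1:ℝ) ≤ T := by linarith
  have hT0 : (0:ℝ) < T := by linarith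
  set K : ℝ := (C₁ * T ^ e) ^ (A - b) with hKdef
  have hCT0 : 0 ≤ C₁ * T ^ e := mul_nonneg hC₁0 (Real.rpow_nonneg hT0.le e)
  have hK0 : 0 ≤ K := Real.rpow_nonneg hCT0 _
  -- step 1 : pointwise bound
  have step1 : ∫ t in Set.Ioc (1:ℝ) T, ‖riemannZeta (1/2 + t * I) * dirichletBeta (1/2 + t * I)‖ ^ A
      ≤ ∫ t in Set.Ioc (1:ℝ) T, K * (F t ^ A * G t ^ b) := by
    apply setIntegral_mono_on
    · exact (((cont_zeta.mul cont_beta).norm).rpow_const fun x => Or.inr hA0.le).integrableOn_Ioc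
    · exact (continuous_const.mul (hFA.mul hGb)).integrableOn_Ioc
    · exact measurableSet_Ioc
    · intro t ht
      have hGab : G t ^ (A - b) ≤ K := by
        apply Real.rpow_le_rpow (norm_nonneg _) _ hab0
        refine le_trans (hC₁ t ht.1.le) ?_
        exact mul_le_mul_of_nonneg_left
          (Real.rpow_le_rpow (by linarith [ht.1]) ht.2 he0.le) hC₁0
      have h1 : ‖riemannZeta (1/2 + t * I) * dirichletBeta (1/2 + t * I)‖ ^ A
          = F t ^ A * (G t ^ b * G t ^ (A - b)) := by
        rw [norm_mul, Real.mul_rpow (norm_nonneg _) (norm_nonneg _),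
          ← Real.rpow_add' (norm_nonneg _) (by ring_nf; exact hA0.ne')]
        ring_nf
        exact mul_comm _ _
      rw [h1]
      calc F t ^ A * (G t ^ b * G t ^ (A - b))
          = (F t ^ A * G t ^ b) * G t ^ (A - b) := by ring
        _ ≤ (F t ^ A * G t ^ b) * K := by
            apply mul_le_mul_of_nonneg_left hGab
            exact mul_nonneg (Real.rpow_nonneg (norm_nonneg _) _) (Real.rpow_nonneg (norm_nonneg _) _)
        _ = K * (F t ^ A * G t ^ b) := by ring
  -- step 2 : core Hölder bound
  have core : ∫ t in Set.Ioc (1:ℝ) T, F t ^ A * G t ^ b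
      ≤ (C₂ * T ^ (M + δ)) ^ (A / D) * (C₃ * T ^ (1 + δ)) ^ ((D - A) / D) := by
    rcases eq_or_lt_of_le hAD with hADeq | hADlt
    · -- A = D : b = 0
      have hbz : b = 0 := by rw [hbdef, hADeq]; ring_nf
      have hADD : A / D = 1 := by rw [hADeq]; field_simp
      have hDA0 : (D - A) / D = 0 := by rw [hADeq]; ring_nf
      rw [hbz, hADD, hDA0, Real.rpow_one, Real.rpow_zero, mul_one]
      calc ∫ t in Set.Ioc (1:ℝ) T, F t ^ A * G t ^ (0:ℝ)
          = ∫ t in Set.Ioc (1:ℝ) T, F t ^ D := by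
            apply integral_congr_ae; filter_upwards with t
            rw [Real.rpow_zero, mul_one, hADeq]
        _ ≤ C₂ * T ^ (M + δ) := hC₂ T hT
    · -- A < D : Hölder with exponents D/A, D/(D-A)
      have hDA : 0 < D - A := by linarith
      have hpq : Real.HolderConjugate (D / A) (D / (D - A)) := by
        refine Real.holderConjugate_iff.2 ⟨?_, ?_⟩
        · rw [lt_div_iff₀ hA0]; linarith
        · rw [inv_div, inv_div]; field_simp; ring
      have h0f : (0:ℝ→ℝ) ≤ᵐ[volume.restrict (Set.Ioc (1:ℝ) T)] fun t => F t ^ A :=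
        Filter.Eventually.of_forall fun t => Real.rpow_nonneg (norm_nonneg _) _
      have h0g : (0:ℝ→ℝ) ≤ᵐ[volume.restrict (Set.Ioc (1:ℝ) T)] fun t => G t ^ b :=
        Filter.Eventually.of_forall fun t => Real.rpow_nonneg (norm_nonneg _) _
      have hold := integral_mul_le_Lp_mul_Lq_of_nonneg hpq h0f h0g
        (memLp_cont hFA T _) (memLp_cont hGb T _)
      have hrw1 : (∫ t in Set.Ioc (1:ℝ) T, (F t ^ A) ^ (D / A))
          = ∫ t in Set.Ioc (1:ℝ) T, F t ^ D := by
        apply integral_congr_ae; filter_upwards with t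
        rw [← Real.rpow_mul (norm_nonneg _)]
        congr 1
        field_simp
      have hrw2 : (∫ t in Set.Ioc (1:ℝ) T, (G t ^ b) ^ (D / (D - A)))
          = ∫ t in Set.Ioc (1:ℝ) T, G t ^ (4:ℝ) := by
        apply integral_congr_ae; filter_upwards with t
        rw [← Real.rpow_mul (norm_nonneg _)]
        congr 1
        rw [hbdef]
        field_simp
      rw [hrw1, hrw2, one_div_div, one_div_div] at hold
      refine le_trans hold ?_
      have hI1 : (0:ℝ) ≤ ∫ t in Set.Ioc (1:ℝ) T, F t ^ D :=
        integral_nonneg fun t => Real.rpow_nonneg (norm_nonneg _) _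
      have hI2 : (0:ℝ) ≤ ∫ t in Set.Ioc (1:ℝ) T, G t ^ (4:ℝ) :=
        integral_nonneg fun t => Real.rpow_nonneg (norm_nonneg _) _
      apply mul_le_mul
      · exact Real.rpow_le_rpow hI1 (hC₂ T hT) (div_nonneg hA0.le hD0.le)
      · exact Real.rpow_le_rpow hI2 (hC₃ T hT) (div_nonneg hDA.le hD0.le)
      · exact Real.rpow_nonneg hI2 _
      · exact Real.rpow_nonneg (mul_nonneg hC₂0 (Real.rpow_nonneg hT0.le _)) _
  -- combine
  have hexp : e * (A - b) + (M + δ) * (A / D) + (1 + δ) * ((D - A) / D)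
      ≤ (13 / 84 + (M - 8 / 21) / D) * A + 8 / 21 + ε := by
    have hnum : (e * (A * D - 4 * (D - A)) + (M + δ) * A + (1 + δ) * (D - A))
        ≤ ((13 / 84) * D + (M - 8 / 21)) * A + (8 / 21) * D + ε * D := by
      have hεD : ε * D = δ * A * D + 2 * δ * D := by rw [← hεδ]; ring
      rw [hedef]
      nlinarith [mul_nonneg hδ.le (show (0:ℝ) ≤ 5 * D - 4 * A by linarith)]
    have hL : e * (A - b) + (M + δ) * (A / D) + (1 + δ) * ((D - A) / D)
        = (e * (A * D - 4 * (D - A)) + (M + δ) * A + (1 + δ) * (D - A)) / D := by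
      rw [hbdef]; field_simp; try ring
    have hR : (13 / 84 + (M - 8 / 21) / D) * A + 8 / 21 + ε
        = (((13 / 84) * D + (M - 8 / 21)) * A + (8 / 21) * D + ε * D) / D := by
      field_simp
      try ring
    rw [hL, hR]
    gcongr
  have hC'0 : 0 ≤ C₁ ^ (A - b) * (C₂ ^ (A / D) * C₃ ^ ((D - A) / D)) :=
    mul_nonneg (Real.rpow_nonneg hC₁0 _)
      (mul_nonneg (Real.rpow_nonneg hC₂0 _) (Real.rpow_nonneg hC₃0 _))
  refine le_trans step1 ?_
  rw [integral_const_mul]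
  refine le_trans (mul_le_mul_of_nonneg_left core hK0) ?_
  have expand : K * ((C₂ * T ^ (M + δ)) ^ (A / D) * (C₃ * T ^ (1 + δ)) ^ ((D - A) / D))
      = (C₁ ^ (A - b) * (C₂ ^ (A / D) * C₃ ^ ((D - A) / D))) *
        T ^ (e * (A - b) + ((M + δ) * (A / D) + (1 + δ) * ((D - A) / D))) := by
    rw [hKdef, Real.mul_rpow hC₁0 (Real.rpow_nonneg hT0.le _),
      Real.mul_rpow hC₂0 (Real.rpow_nonneg hT0.le _),
      Real.mul_rpow hC₃0 (Real.rpow_nonneg hT0.le _),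
      ← Real.rpow_mul hT0.le, ← Real.rpow_mul hT0.le, ← Real.rpow_mul hT0.le,
      Real.rpow_add hT0, Real.rpow_add hT0]
    ring
  rw [expand]
  apply mul_le_mul_of_nonneg_left _ hC'0
  exact Real.rpow_le_rpow_of_exponent_le hT1 (by linarith [hexp])
end

section
/- Let k, l be reals with k > 0, l ≥ 0, -2k + 4l + 2 > 0 and 1 - k - 16l/13 ≥ 0, and let A > (4k+4l+2)/k be real. Assume: (i) for every ε > 0 there is a constant with |ζ(1/2+it)| ≤ C t^{13/84+ε} for all t ≥ 1; (ii) for every ε > 0 there is a constant C₀(ε) such that for all T ≥ 2, all V ≥ 1, and every finite family of points t₁ < t₂ < ⋯ < t_R in [1, T] satisfying t_{r+1} - t_r ≥ 1 and |ζ(1/2 + i t_r)| ≥ V for all r, one has R ≤ C₀(ε)·(T^{1+ε} V^{-6} + T^{1+l/k+ε} V^{-2(1+2k+2l)/k}). Then for every ε > 0 there is a constant C₁(ε) such that for all T ≥ 2 and every finite family of points t₁ < ⋯ < t_R in [1, T] with t_{r+1} - t_r ≥ 1, one has ∑_{r=1}^{R} |ζ(1/2 + i t_r)|^A ≤ C₁(ε)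 · T^{1 + 13(A-6)/84 + ε}. -/
open Complex MeasureTheory

lemma spacing_card_le {T : ℝ} (hT : 1 ≤ T) {R : ℕ} {t : Fin R → ℝ}
    (hmem : ∀ r, t r ∈ Set.Icc (1:ℝ) T)
    (hsp : ∀ r s : Fin R, r < s → t r + 1 ≤ t s) : (R : ℝ) ≤ T := by
  rcases Nat.eq_zero_or_pos R with h0 | hpos
  · simp [h0]; linarith
  have key : ∀ i (h : i < R), (i : ℝ) + 1 ≤ t ⟨i, h⟩ := by
    intro i
    induction i with
    | zero => intro h; simpa using (hmem ⟨0, h⟩).1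
    | succ n ih =>
      intro h
      have hn : n < R := Nat.lt_of_succ_lt h
      have := hsp ⟨n, hn⟩ ⟨n+1, h⟩ (by simp)
      have := ih hn
      push_cast
      linarith
  have hR1 : R - 1 < R := Nat.sub_lt hpos one_pos
  have h1 := key (R-1) hR1
  have h2 := (hmem ⟨R-1, hR1⟩).2
  have : ((R - 1 : ℕ) : ℝ) = (R : ℝ) - 1 := by
    have : (1:ℕ) ≤ R := hpos
    push_cast [Nat.cast_sub this]
    ring
  rw [this] at h1
  linarith

lemma count_large {T D V : ℝ} {R : ℕ} {t : Fin R → ℝ}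
    (hmem : ∀ r, t r ∈ Set.Icc (1:ℝ) T)
    (hsp : ∀ r s : Fin R, r < s → t r + 1 ≤ t s)
    (key : ∀ (n : ℕ) (u : Fin n → ℝ),
      (∀ r, u r ∈ Set.Icc (1:ℝ) T) → (∀ r s : Fin n, r < s → u r + 1 ≤ u s) →
      (∀ r, V ≤ ‖riemannZeta (1/2 + u r * I)‖) → (n : ℝ) ≤ D) :
    ((Finset.univ.filter
        (fun r => V ≤ ‖riemannZeta (1/2 + t r * I)‖)).card : ℝ) ≤ D := by
  set S := Finset.univ.filter (fun r => V ≤ ‖riemannZeta (1/2 + t r * I)‖) with hS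
  have e := S.orderIsoOfFin rfl
  refine key S.card (fun i => t (e i)) (fun r => hmem _) ?_ ?_
  · intro r s hrs
    exact hsp _ _ (by exact_mod_cast (e.lt_iff_lt.mpr hrs))
  · intro r
    have h := (e r).2
    simp only [hS, Finset.mem_filter] at h
    exact h.2

lemma rpow_integrableOn {M c : ℝ} :
    IntegrableOn (fun V : ℝ => V ^ c) (Set.Ioc (1:ℝ) M) := by
  refine (ContinuousOn.integrableOn_Icc ?_).mono_set Set.Ioc_subset_Icc_self
  intro V hV
  exact (Real.continuousAt_rpow_const V c (Or.inl (by linarith [hV.1]))).continuousWithinAt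

lemma int_rpow_Ioc {M c : ℝ} (hM : 1 ≤ M) (hc : 0 < c + 1) :
    ∫ V in Set.Ioc (1:ℝ) M, V ^ c ≤ M ^ (c+1) / (c+1) := by
  rw [← intervalIntegral.integral_of_le hM, integral_rpow (Or.inl (by linarith)),
    Real.one_rpow]
  have h1 : (0:ℝ) ≤ 1 := zero_le_one
  gcongr
  linarith

lemma layer_cake {A M x : ℝ} (hA : 0 < A) (hx : 0 ≤ x) (hxM : x ≤ M) :
    x ^ A ≤ 1 + A * ∫ V in Set.Ioc (1:ℝ) M,
      (Set.Iic x).indicator (fun V => V ^ (A-1)) V := by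
  have hind : ∀ V ∈ Set.Ioc (1:ℝ) M,
      (0:ℝ) ≤ (Set.Iic x).indicator (fun V => V ^ (A-1)) V := by
    intro V hV
    rcases Set.indicator_eq_zero_or_self (Set.Iic x) (fun V => V ^ (A-1)) V with h | h <;>
      rw [h]
    exact Real.rpow_nonneg (by linarith [hV.1]) _
  have hnn : 0 ≤ ∫ V in Set.Ioc (1:ℝ) M,
      (Set.Iic x).indicator (fun V => V ^ (A-1)) V :=
    setIntegral_nonneg measurableSet_Ioc hind
  rcases le_or_gt x 1 with hx1 | hx1
  · have : x ^ A ≤ 1 := Real.rpow_le_one hx hx1 hA.le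
    nlinarith
  · have hInt : IntegrableOn ((Set.Iic x).indicator (fun V => V ^ (A-1)))
        (Set.Ioc (1:ℝ) M) :=
      rpow_integrableOn.indicator measurableSet_Iic
    have hsub : Set.Ioc (1:ℝ) x ⊆ Set.Ioc (1:ℝ) M := Set.Ioc_subset_Ioc_right hxM
    have step1 : ∫ V in Set.Ioc (1:ℝ) x,
          (Set.Iic x).indicator (fun V => V ^ (A-1)) V
        ≤ ∫ V in Set.Ioc (1:ℝ) M,
          (Set.Iic x).indicator (fun V => V ^ (A-1)) V := by
      refine setIntegral_mono_set hInt ?_ (HasSubset.Subset.eventuallyLE hsub)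
      filter_upwards [ae_restrict_mem measurableSet_Ioc] with V hV
      exact hind V hV
    have step2 : ∫ V in Set.Ioc (1:ℝ) x,
          (Set.Iic x).indicator (fun V => V ^ (A-1)) V
        = ∫ V in Set.Ioc (1:ℝ) x, V ^ (A-1) := by
      refine setIntegral_congr_fun measurableSet_Ioc ?_
      intro V hV
      exact Set.indicator_of_mem (Set.mem_Iic.mpr hV.2) _
    have step3 : ∫ V in Set.Ioc (1:ℝ) x, V ^ (A-1) = (x ^ A - 1)/A := by
      rw [← intervalIntegral.integral_of_le hx1.le,
        integral_rpow (Or.inl (by linarith)), Real.one_rpow]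
      norm_num
    have : (x ^ A - 1)/A ≤ ∫ V in Set.Ioc (1:ℝ) M,
        (Set.Iic x).indicator (fun V => V ^ (A-1)) V := by
      rw [← step3, ← step2]; exact step1
    calc x ^ A = 1 + A * ((x ^ A - 1)/A) := by field_simp; ring
      _ ≤ _ := by nlinarith

/-- The discrete third-case moment bound for `ζ`: assuming Bourgain's
subconvexity bound `ζ(1/2+it) ≪ t^(13/84+ε)` and Ivić's large-values estimate for an
exponent pair `(k,l)` with `1 - k - 16l/13 ≥ 0`, for any `A > (4k+4l+2)/k` and any
well-spaced points `t₁ < ⋯ < t_R` in `[1,T]` one has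
`∑_r |ζ(1/2+it_r)|^A ≪ T^(1+13(A-6)/84+ε)`. -/
theorem discrete_zeta_moment_third_case (k l : ℝ) (hk : 0 < k) (hl : 0 ≤ l)
    (hden : 0 < -2 * k + 4 * l + 2) (hkl : 1 - k - 16 * l / 13 ≥ 0)
    (A : ℝ) (hA : (4 * k + 4 * l + 2) / k < A)
    (hζpt : ∀ ε : ℝ, 0 < ε → ∃ C : ℝ, ∀ t : ℝ, t ≥ 1 →
      ‖riemannZeta (1/2 + t * I)‖ ≤ C * t ^ (13 / 84 + ε))
    (hLV : ∀ ε : ℝ, 0 < ε → ∃ C₀ : ℝ, ∀ T : ℝ, T ≥ 2 → ∀ V : ℝ, V ≥ 1 →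
      ∀ R : ℕ, ∀ t : Fin R → ℝ,
        (∀ r, t r ∈ Set.Icc (1 : ℝ) T) →
        (∀ r s : Fin R, r < s → t r + 1 ≤ t s) →
        (∀ r, V ≤ ‖riemannZeta (1/2 + t r * I)‖) →
        (R : ℝ) ≤ C₀ * (T ^ (1 + ε) * V ^ (-6 : ℝ) +
          T ^ (1 + l / k + ε) * V ^ (-(2 * (1 + 2 * k + 2 * l) / k)))) :
    ∀ ε : ℝ, 0 < ε → ∃ C₁ : ℝ, ∀ T : ℝ, T ≥ 2 → ∀ R : ℕ, ∀ t : Fin R → ℝ,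
      (∀ r, t r ∈ Set.Icc (1 : ℝ) T) →
      (∀ r s : Fin R, r < s → t r + 1 ≤ t s) →
      ∑ r, ‖riemannZeta (1/2 + t r * I)‖ ^ A ≤
        C₁ * T ^ (1 + 13 * (A - 6) / 84 + ε) := by
  intro ε hε
  set B : ℝ := 2 * (1 + 2 * k + 2 * l) / k with hBdef
  have hAB : B < A := by
    have : B = (4 * k + 4 * l + 2) / k := by rw [hBdef]; ring
    rw [this]; exact hA
  have hB6 : 6 < B := by
    rw [hBdef, lt_div_iff₀ hk]
    linarith
  have hA6 : 6 < A := hB6.trans hAB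
  have hA0 : 0 < A := by linarith
  set ε₀ : ℝ := ε / (A - 5) with hε₀def
  have hε₀ : 0 < ε₀ := div_pos hε (by linarith)
  have hε₀A : ε₀ * (A - 5) = ε := div_mul_cancel₀ ε (by linarith)
  obtain ⟨C, hC⟩ := hζpt ε₀ hε₀
  obtain ⟨C₀, hC₀⟩ := hLV ε₀ hε₀
  set C' : ℝ := max C 1 with hC'def
  set C₀' : ℝ := max C₀ 0 with hC₀'def
  have hC'1 : 1 ≤ C' := le_max_right _ _
  have hC'0 : 0 ≤ C' := by linarith
  have hC₀'0 : 0 ≤ C₀' := le_max_right _ _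
  set e : ℝ := 13 / 84 + ε₀ with hedef
  have he0 : 0 < e := by positivity
  set E : ℝ := 1 + 13 * (A - 6) / 84 + ε with hEdef
  have hE1 : 1 ≤ E := by
    rw [hEdef]; linarith
  -- exponent inequalities
  have hBk : B * k = 2 + 4 * k + 4 * l := by
    rw [hBdef]; field_simp; ring
  have h13 : 13 * k + 16 * l ≤ 13 := by linarith
  set plk : ℝ := l / k with hplkdef
  have hplk : plk * k = l := div_mul_cancel₀ l hk.ne'
  have hlk : plk ≤ 13 * (B - 6) / 84 := by
    rw [le_div_iff₀ (by norm_num : (0:ℝ) < 84)]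
    have h84 : plk * 84 * k ≤ 13 * (B - 6) * k := by linarith [hplk, hBk, h13]
    exact le_of_mul_le_mul_right (by linarith) hk
  have key1 : 1 + ε₀ + e * (A - 6) ≤ E := by
    rw [hedef, hEdef]; linarith [hε₀A]
  have key2 : 1 + plk + ε₀ + e * (A - B) ≤ E := by
    have hprod : 0 ≤ ε₀ * (B - 6) := mul_nonneg hε₀.le (by linarith)
    rw [hedef, hEdef]
    linarith [hε₀A, hlk, hprod]
  refine ⟨1 + A * C₀' * C' ^ (A - 6) / (A - 6) + A * C₀' * C' ^ (A - B) / (A - B),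
    fun T hT R t hmem hsp => ?_⟩
  have hT1 : (1:ℝ) ≤ T := by linarith
  have hT0 : (0:ℝ) < T := by linarith
  set X : Fin R → ℝ := fun r => ‖riemannZeta (1/2 + t r * I)‖ with hXdef
  set M : ℝ := C' * T ^ e with hMdef
  have hTe1 : 1 ≤ T ^ e := by
    rw [show (1:ℝ) = T ^ (0:ℝ) by rw [Real.rpow_zero]]
    exact Real.rpow_le_rpow_of_exponent_le hT1 he0.le
  have hM1 : 1 ≤ M := by
    rw [hMdef]
    calc (1:ℝ) = 1 * 1 := by norm_num
      _ ≤ C' * T ^ e := mul_le_mul hC'1 hTe1 zero_le_one hC'0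
  have hXM : ∀ r, X r ≤ M := by
    intro r
    have h1 := hC (t r) ((hmem r).1)
    have h2 : C * (t r) ^ e ≤ C' * (t r) ^ e :=
      mul_le_mul_of_nonneg_right (le_max_left C 1)
        (Real.rpow_nonneg (by linarith [(hmem r).1]) _)
    have h3 : C' * (t r) ^ e ≤ C' * T ^ e :=
      mul_le_mul_of_nonneg_left
        (Real.rpow_le_rpow (by linarith [(hmem r).1] : (0:ℝ) ≤ t r)
          ((hmem r).2) he0.le) hC'0
    calc X r ≤ C * (t r) ^ e := h1
      _ ≤ M := by rw [hMdef]; linarith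
  -- the per-point indicator functions
  set f : Fin R → ℝ → ℝ :=
    fun r => (Set.Iic (X r)).indicator (fun V => V ^ (A-1)) with hfdef
  have hfInt : ∀ r, IntegrableOn (f r) (Set.Ioc (1:ℝ) M) :=
    fun r => rpow_integrableOn.indicator measurableSet_Iic
  have step1 : ∑ r, X r ^ A ≤
      (R:ℝ) + A * ∑ r, ∫ V in Set.Ioc (1:ℝ) M, f r V := by
    have h := Finset.sum_le_sum (fun r (_ : r ∈ Finset.univ) =>
      layer_cake hA0 (norm_nonneg (riemannZeta (1/2 + t r * I))) (hXM r))
    calc ∑ r, X r ^ A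
        ≤ ∑ r : Fin R, (1 + A * ∫ V in Set.Ioc (1:ℝ) M, f r V) := h
      _ = (R:ℝ) + A * ∑ r, ∫ V in Set.Ioc (1:ℝ) M, f r V := by
          rw [Finset.sum_add_distrib, Finset.sum_const, ← Finset.mul_sum]
          simp [nsmul_eq_mul]
  have step2 : ∑ r, ∫ V in Set.Ioc (1:ℝ) M, f r V
      = ∫ V in Set.Ioc (1:ℝ) M, ∑ r, f r V :=
    (integral_finset_sum Finset.univ (fun r _ => hfInt r)).symm
  -- pointwise bound on the sum of indicators
  set T1 : ℝ := T ^ (1 + ε₀) with hT1def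
  set T2 : ℝ := T ^ (1 + l / k + ε₀) with hT2def
  have hT1nn : 0 ≤ T1 := Real.rpow_nonneg hT0.le _
  have hT2nn : 0 ≤ T2 := Real.rpow_nonneg hT0.le _
  set g : ℝ → ℝ := fun V => C₀' * T1 * V ^ (A - 7) + C₀' * T2 * V ^ (A - 1 - B)
    with hgdef
  have hgInt : IntegrableOn g (Set.Ioc (1:ℝ) M) :=
    (rpow_integrableOn.const_mul _).add (rpow_integrableOn.const_mul _)
  have hFInt : IntegrableOn (fun V => ∑ r, f r V) (Set.Ioc (1:ℝ) M) :=
    integrable_finset_sum _ (fun r _ => hfInt r)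
  have hpt : ∀ V ∈ Set.Ioc (1:ℝ) M, ∑ r, f r V ≤ g V := by
    intro V hV
    have hV1 : (1:ℝ) ≤ V := hV.1.le
    have hV0 : (0:ℝ) < V := by linarith
    have hcount : ((Finset.univ.filter (fun r => V ≤ X r)).card : ℝ) ≤
        C₀' * (T ^ (1 + ε₀) * V ^ (-6 : ℝ) +
          T ^ (1 + l / k + ε₀) * V ^ (-(2 * (1 + 2 * k + 2 * l) / k))) := by
      refine count_large hmem hsp ?_
      intro n u humem husp huV
      have h1 := hC₀ T hT V hV1 n u humem husp huV
      have hpos : 0 ≤ T ^ (1 + ε₀) * V ^ (-6 : ℝ) +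
          T ^ (1 + l / k + ε₀) * V ^ (-(2 * (1 + 2 * k + 2 * l) / k)) := by
        positivity
      exact h1.trans (mul_le_mul_of_nonneg_right (le_max_left C₀ 0) hpos)
    have hsumf : ∑ r, f r V =
        ((Finset.univ.filter (fun r => V ≤ X r)).card : ℝ) * V ^ (A - 1) := by
      rw [hfdef]
      simp only [Set.indicator_apply, Set.mem_Iic]
      rw [← Finset.sum_filter, Finset.sum_const, nsmul_eq_mul]
    have hgV : g V = C₀' * (T ^ (1 + ε₀) * V ^ (-6 : ℝ) +
        T ^ (1 + l / k + ε₀) * V ^ (-(2 * (1 + 2 * k + 2 * l) / k))) * V ^ (A-1) := by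
      simp only [hgdef]
      have e1 : V ^ (A - 7) = V ^ (-6 : ℝ) * V ^ (A - 1) := by
        rw [← Real.rpow_add hV0]; congr 1; ring
      have e2 : V ^ (A - 1 - B) = V ^ (-B) * V ^ (A - 1) := by
        rw [← Real.rpow_add hV0]; congr 1; ring
      have e3 : -(2 * (1 + 2 * k + 2 * l) / k) = -B := by rw [hBdef]
      rw [e3, e1, e2, hT1def, hT2def]
      ring
    rw [hsumf, hgV]
    have hVA : (0:ℝ) ≤ V ^ (A - 1) := Real.rpow_nonneg hV0.le _
    exact mul_le_mul_of_nonneg_right hcount hVA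
  have step3 : ∫ V in Set.Ioc (1:ℝ) M, ∑ r, f r V ≤ ∫ V in Set.Ioc (1:ℝ) M, g V :=
    setIntegral_mono_on hFInt hgInt measurableSet_Ioc hpt
  have step4 : ∫ V in Set.Ioc (1:ℝ) M, g V ≤
      C₀' * T1 * (M ^ (A - 6) / (A - 6)) + C₀' * T2 * (M ^ (A - B) / (A - B)) := by
    simp only [hgdef]
    rw [integral_add (rpow_integrableOn.const_mul _) (rpow_integrableOn.const_mul _),
      integral_const_mul, integral_const_mul]
    have i1 : ∫ V in Set.Ioc (1:ℝ) M, V ^ (A - 7) ≤ M ^ (A - 6) / (A - 6) := by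
      have h := int_rpow_Ioc (M := M) (c := A - 7) hM1 (by linarith)
      rw [show A - 7 + 1 = A - 6 by ring] at h
      exact h
    have i2 : ∫ V in Set.Ioc (1:ℝ) M, V ^ (A - 1 - B) ≤ M ^ (A - B) / (A - B) := by
      have h := int_rpow_Ioc (M := M) (c := A - 1 - B) hM1 (by linarith)
      rw [show A - 1 - B + 1 = A - B by ring] at h
      exact h
    have hc1 : 0 ≤ C₀' * T1 := mul_nonneg hC₀'0 hT1nn
    have hc2 : 0 ≤ C₀' * T2 := mul_nonneg hC₀'0 hT2nn
    exact add_le_add (mul_le_mul_of_nonneg_left i1 hc1)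
      (mul_le_mul_of_nonneg_left i2 hc2)
  -- put exponents together
  have hMpow : ∀ c : ℝ, M ^ c = C' ^ c * T ^ (e * c) := by
    intro c
    rw [hMdef, Real.mul_rpow hC'0 (Real.rpow_nonneg hT0.le _),
      ← Real.rpow_mul hT0.le]
  -- final assembly
  have hRT : (R : ℝ) ≤ T ^ E := by
    calc (R : ℝ) ≤ T := spacing_card_le hT1 hmem hsp
      _ = T ^ (1:ℝ) := (Real.rpow_one T).symm
      _ ≤ T ^ E := Real.rpow_le_rpow_of_exponent_le hT1 hE1
  have hterm1 : A * (C₀' * T1 * (M ^ (A - 6) / (A - 6))) ≤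
      (A * C₀' * C' ^ (A - 6) / (A - 6)) * T ^ E := by
    have hm1 : M ^ (A - 6) = C' ^ (A - 6) * T ^ (e * (A - 6)) := hMpow _
    have ha1 : T1 * T ^ (e * (A - 6)) = T ^ (1 + ε₀ + e * (A - 6)) := by
      rw [hT1def, ← Real.rpow_add hT0]
    have heq : A * (C₀' * T1 * (M ^ (A - 6) / (A - 6))) =
        (A * C₀' * C' ^ (A - 6) / (A - 6)) * (T1 * T ^ (e * (A - 6))) := by
      rw [hm1]; ring
    rw [heq, ha1]
    have hK1 : 0 ≤ A * C₀' * C' ^ (A - 6) / (A - 6) := by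
      apply div_nonneg _ (by linarith)
      exact mul_nonneg (mul_nonneg hA0.le hC₀'0) (Real.rpow_nonneg hC'0 _)
    exact mul_le_mul_of_nonneg_left
      (Real.rpow_le_rpow_of_exponent_le hT1 key1) hK1
  have hterm2 : A * (C₀' * T2 * (M ^ (A - B) / (A - B))) ≤
      (A * C₀' * C' ^ (A - B) / (A - B)) * T ^ E := by
    have hm2 : M ^ (A - B) = C' ^ (A - B) * T ^ (e * (A - B)) := hMpow _
    have ha2 : T2 * T ^ (e * (A - B)) = T ^ (1 + plk + ε₀ + e * (A - B)) := by
      rw [hT2def, ← Real.rpow_add hT0, hplkdef]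
    have heq : A * (C₀' * T2 * (M ^ (A - B) / (A - B))) =
        (A * C₀' * C' ^ (A - B) / (A - B)) * (T2 * T ^ (e * (A - B))) := by
      rw [hm2]; ring
    rw [heq, ha2]
    have hK2 : 0 ≤ A * C₀' * C' ^ (A - B) / (A - B) := by
      apply div_nonneg _ (by linarith)
      exact mul_nonneg (mul_nonneg hA0.le hC₀'0) (Real.rpow_nonneg hC'0 _)
    exact mul_le_mul_of_nonneg_left
      (Real.rpow_le_rpow_of_exponent_le hT1 key2) hK2
  calc ∑ r, ‖riemannZeta (1/2 + t r * I)‖ ^ A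
      = ∑ r, X r ^ A := rfl
    _ ≤ (R:ℝ) + A * ∑ r, ∫ V in Set.Ioc (1:ℝ) M, f r V := step1
    _ = (R:ℝ) + A * ∫ V in Set.Ioc (1:ℝ) M, ∑ r, f r V := by rw [step2]
    _ ≤ (R:ℝ) + A * (C₀' * T1 * (M ^ (A - 6) / (A - 6)) +
          C₀' * T2 * (M ^ (A - B) / (A - B))) := by
        exact add_le_add (le_refl _)
          (mul_le_mul_of_nonneg_left (step3.trans step4) hA0.le)
    _ = (R:ℝ) + (A * (C₀' * T1 * (M ^ (A - 6) / (A - 6))) +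
          A * (C₀' * T2 * (M ^ (A - B) / (A - B)))) := by ring
    _ ≤ T ^ E + ((A * C₀' * C' ^ (A - 6) / (A - 6)) * T ^ E +
          (A * C₀' * C' ^ (A - B) / (A - B)) * T ^ E) :=
        add_le_add hRT (add_le_add hterm1 hterm2)
    _ = (1 + A * C₀' * C' ^ (A - 6) / (A - 6) +
          A * C₀' * C' ^ (A - B) / (A - B)) * T ^ E := by ring
end
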